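/- Let p ∈ (0,1) and for λ > (1-p)/p let r(λ) be the unique root of h_λ(x) = p·x^{λ+1} - x + (1-p) in (0,1). Then r(λ) is strictly decreasing in λ. -/

import Mathlib

theorem stmt_15 (p : ℝ) (hp : p ∈ Set.Ioo (0 : ℝ) 1)
    (r : ℝ → ℝ)
    (hr : ∀ lam : ℝ, (1 - p) / p < lam →
      r lam ∈ Set.Ioo (0 : ℝ) 1 ∧ p * (r lam) ^ (lam + 1) - r lam + (1 - p) = 0) :
    StrictAntiOn r (Set.Ioi ((1 - p) / p)) := by
  intro a ha b hb hab
  simp only [Set.mem_Ioi] at ha hb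
  obtain ⟨⟨hx0, hx1⟩, hxe⟩ := hr a ha
  obtain ⟨⟨hy0, hy1⟩, hye⟩ := hr b hb
  set x := r a with hxdef
  set y := r b with hydef
  obtain ⟨hp0, hp1⟩ := hp
  have hcpos : 0 < (1 - p) / p := div_pos (by linarith) hp0
  have hq : 1 < b + 1 := by linarith
  have hxb : p * x ^ (b + 1) - x + (1 - p) < 0 := by
    have h1 : x ^ (b + 1) < x ^ (a + 1) :=
      Real.rpow_lt_rpow_of_exponent_gt hx0 hx1 (by linarith)
    nlinarith
  by_contra hle
  push_neg at hle
  rcases eq_or_lt_of_le hle with heq | hlt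
  · rw [heq] at hxb; linarith
  · set s : ℝ := (1 - y) / (1 - x) with hsdef
    set t : ℝ := (y - x) / (1 - x) with htdef
    have hx1' : (0:ℝ) < 1 - x := by linarith
    have hs : (0:ℝ) < s := div_pos (by linarith) hx1'
    have ht : (0:ℝ) < t := div_pos (by linarith) hx1'
    have hst : s + t = 1 := by rw [hsdef, htdef]; field_simp; ring
    have hconv := strictConvexOn_rpow hq
    have hkey := hconv.2 (Set.mem_Ici.2 hx0.le) (Set.mem_Ici.2 (by norm_num : (0:ℝ) ≤ 1))
      (by linarith : x ≠ 1) hs ht hst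
    have hcomb : s • x + t • (1:ℝ) = y := by
      simp only [smul_eq_mul, hsdef, htdef]
      field_simp
      ring
    rw [hcomb] at hkey
    simp only [smul_eq_mul, Real.one_rpow, mul_one] at hkey
    -- hkey : y ^ (b+1) < s * x ^ (b+1) + t
    have h2 : p * y ^ (b + 1) < p * (s * x ^ (b + 1) + t) :=
      mul_lt_mul_of_pos_left hkey hp0
    have hsx : s * x + t = y := by simpa [smul_eq_mul] using hcomb
    have hEs : s * (p * x ^ (b + 1) - x + (1 - p)) < 0 :=
      mul_neg_of_pos_of_neg hs hxb
    nlinarith [hEs, h2, hye, hst, hsx]
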